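/- Let τ_1, …, τ_N be positive time steps. If the BDF2 kernels are positive semi-definite, i.e. Σ_{k=1}^n w_k Σ_{j=1}^k b^{(k)}_{k−j} w_j ≥ 0 for every 1 ≤ n ≤ N and every real sequence w_1, …, w_n, then the DOC kernels are also positive semi-definite: Σ_{k=1}^n w_k Σ_{j=1}^k θ^{(k)}_{k−j} w_j ≥ 0 for every 1 ≤ n ≤ N and every real sequence w_1, …, w_n. -/

import Mathlib

open Finset
open scoped Matrix

/-- BDF2 convolution kernels `b^{(n)}_j` built from the step sizes `τ`. -/
noncomputable def bdf2 (τ : ℕ → ℝ) (n j : ℕ) : ℝ :=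
  if n = 1 then (if j = 0 then 1 / τ 1 else 0)
  else if j = 0 then (1 + 2 * (τ n / τ (n - 1))) / (τ n * (1 + τ n / τ (n - 1)))
  else if j = 1 then -(τ n / τ (n - 1)) ^ 2 / (τ n * (1 + τ n / τ (n - 1)))
  else 0

/-- DOC kernels: `doc τ n g = θ^{(n)}_g`, defined by the recursive procedure
`θ^{(n)}_0 = 1/b^{(n)}_0`, `θ^{(n)}_{n-k} = -(1/b^{(k)}_0) ∑_{j=k+1}^n θ^{(n)}_{n-j} b^{(j)}_{j-k}`. -/
noncomputable def doc (τ : ℕ → ℝ) (n : ℕ) : ℕ → ℝ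
  | 0 => 1 / bdf2 τ n 0
  | (g + 1) =>
    -(1 / bdf2 τ (n - (g + 1)) 0) *
      ∑ i ∈ (Finset.range (g + 1)).attach,
        doc τ n i.1 * bdf2 τ (n - i.1) (g + 1 - i.1)
  decreasing_by exact Finset.mem_range.mp i.2

/-- The variable-step BDF2 formula `D_2 v^n = ∑_{k=1}^n b^{(n)}_{n-k} (v^k - v^{k-1})`. -/
noncomputable def D2 {V : Type*} [AddCommGroup V] [Module ℝ V]
    (τ : ℕ → ℝ) (v : ℕ → V) (n : ℕ) : V :=
  ∑ k ∈ Finset.Icc 1 n, bdf2 τ n (n - k) • (v k - v (k - 1))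

/-- Time levels `t_n = τ_1 + ⋯ + τ_n`. -/
noncomputable def tlv (τ : ℕ → ℝ) (n : ℕ) : ℝ := ∑ i ∈ Finset.Icc 1 n, τ i

/-! ### Auxiliary machinery -/

/-- Positivity of the leading BDF2 kernel coefficient. -/
lemma bdf2_zero_pos (τ : ℕ → ℝ) (N : ℕ) (hτ : ∀ k, 1 ≤ k → k ≤ N → 0 < τ k)
    (k : ℕ) (h1 : 1 ≤ k) (h2 : k ≤ N) : 0 < bdf2 τ k 0 := by
  unfold bdf2
  rcases eq_or_ne k 1 with hk | hk
  · simp [hk]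
    exact hτ 1 le_rfl (hk ▸ h2)
  · simp [hk]
    have hk2 : 2 ≤ k := by omega
    have hτk : 0 < τ k := hτ k h1 h2
    have hτk1 : 0 < τ (k-1) := hτ (k-1) (by omega) (by omega)
    have hr : 0 < τ k / τ (k-1) := div_pos hτk hτk1
    exact div_pos (by linarith) (by positivity)

/-- The lower-triangular BDF2 matrix. -/
noncomputable def Bm (τ : ℕ → ℝ) (n : ℕ) : Matrix (Fin n) (Fin n) ℝ :=
  Matrix.of fun i j => if (j:ℕ) ≤ (i:ℕ) then bdf2 τ ((i:ℕ)+1) ((i:ℕ)-(j:ℕ)) else 0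

/-- The lower-triangular DOC matrix. -/
noncomputable def Tm (τ : ℕ → ℝ) (n : ℕ) : Matrix (Fin n) (Fin n) ℝ :=
  Matrix.of fun i j => if (j:ℕ) ≤ (i:ℕ) then doc τ ((i:ℕ)+1) ((i:ℕ)-(j:ℕ)) else 0

lemma sum_Icc_one (n : ℕ) (f : ℕ → ℝ) :
    ∑ i ∈ Icc 1 n, f i = ∑ i ∈ range n, f (i+1) := by
  rw [← Finset.Ico_add_one_right_eq_Icc, Finset.sum_Ico_eq_sum_range]
  simp [add_comm]

/-- Conversion of the triangular bilinear form to a matrix quadratic form. -/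
lemma conv_quadform (n : ℕ) (f : ℕ → ℕ → ℝ) (w : ℕ → ℝ) :
    ∑ k ∈ Icc 1 n, w k * ∑ j ∈ Icc 1 k, f k j * w j
      = (fun i : Fin n => w ((i:ℕ)+1)) ⬝ᵥ
        ((Matrix.of fun i j : Fin n => if (j:ℕ) ≤ (i:ℕ) then f ((i:ℕ)+1) ((j:ℕ)+1) else 0) *ᵥ
          (fun i : Fin n => w ((i:ℕ)+1))) := by
  trans ∑ i : Fin n, w ((i:ℕ)+1) *
      ∑ j : Fin n, (if (j:ℕ) ≤ (i:ℕ) then f ((i:ℕ)+1) ((j:ℕ)+1) else 0) * w ((j:ℕ)+1)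
  swap
  · simp [Matrix.mulVec, dotProduct]
  rw [Fin.sum_univ_eq_sum_range (fun i => w (i+1) *
      ∑ j : Fin n, (if (j:ℕ) ≤ i then f (i+1) ((j:ℕ)+1) else 0) * w ((j:ℕ)+1))]
  rw [sum_Icc_one]
  refine Finset.sum_congr rfl fun i hi => ?_
  have hin : i < n := Finset.mem_range.mp hi
  congr 1
  rw [Fin.sum_univ_eq_sum_range (fun j => (if j ≤ i then f (i+1) (j+1) else 0) * w (j+1))]
  rw [sum_Icc_one]
  simp only [ite_mul, zero_mul]
  rw [← Finset.sum_filter]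
  have hf : (range n).filter (fun j => j ≤ i) = range (i+1) := by
    ext j; simp; omega
  rw [hf]

/-- The DOC matrix is a left inverse of the BDF2 matrix. -/
lemma Tm_mul_Bm (τ : ℕ → ℝ) (n : ℕ) (hb0 : ∀ k, 1 ≤ k → k ≤ n → bdf2 τ k 0 ≠ 0) :
    Tm τ n * Bm τ n = 1 := by
  ext i k
  rw [Matrix.mul_apply, Matrix.one_apply]
  set G : ℕ → ℝ := fun j =>
    (if j ≤ (i:ℕ) then doc τ ((i:ℕ)+1) ((i:ℕ)-j) else 0) *
    (if (k:ℕ) ≤ j then bdf2 τ (j+1) (j-(k:ℕ)) else 0) with hGdef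
  have h1 : ∑ j : Fin n, Tm τ n i j * Bm τ n j k = ∑ j ∈ range n, G j :=
    Fin.sum_univ_eq_sum_range G n
  rw [h1]
  set h : ℕ → ℝ := fun j => doc τ ((i:ℕ)+1) ((i:ℕ)-j) * bdf2 τ (j+1) (j-(k:ℕ)) with hhdef
  have h2 : ∑ j ∈ range n, G j = ∑ j ∈ Icc (k:ℕ) (i:ℕ), h j := by
    have : ∀ j ∈ range n, G j = if j ∈ Icc (k:ℕ) (i:ℕ) then h j else 0 := by
      intro j _
      by_cases hji : j ≤ (i:ℕ) <;> by_cases hkj : (k:ℕ) ≤ j <;>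
        simp [hGdef, hhdef, hji, hkj, Finset.mem_Icc]
    rw [Finset.sum_congr rfl this, ← Finset.sum_filter]
    congr 1
    ext j
    simp only [Finset.mem_filter, Finset.mem_range, Finset.mem_Icc]
    constructor
    · rintro ⟨_, h⟩; exact h
    · rintro ⟨ha, hb⟩; exact ⟨lt_of_le_of_lt hb i.isLt, ha, hb⟩
  rw [h2]
  rcases lt_trichotomy (i:ℕ) (k:ℕ) with hik | hik | hik
  · rw [Finset.Icc_eq_empty (by omega), Finset.sum_empty, if_neg]
    intro he; rw [he] at hik; omega
  · have hie : i = k := Fin.ext hik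
    have hkn : (k:ℕ) < n := k.isLt
    rw [hik, Finset.Icc_self, Finset.sum_singleton, if_pos hie]
    simp only [hhdef]
    rw [hik]
    simp only [Nat.sub_self]
    rw [doc, one_div, inv_mul_cancel₀ (hb0 ((k:ℕ)+1) (by omega) (by omega))]
  · -- k < i : the sum telescopes to zero by the DOC recursion
    rw [if_neg (by intro he; rw [he] at hik; omega)]
    set In : ℕ := (i:ℕ) with hIn
    set Kn : ℕ := (k:ℕ) with hKn
    set m : ℕ := In - Kn with hm
    have hm1 : 1 ≤ m := by omega
    have hImK : In = Kn + m := by omega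
    have hnm : In + 1 - Kn = m + 1 := by omega
    have hIcc : ∑ j ∈ Icc Kn In, h j = ∑ d ∈ range (m+1), h (Kn + d) := by
      rw [← Finset.Ico_add_one_right_eq_Icc, Finset.sum_Ico_eq_sum_range, hnm]
    rw [hIcc, Finset.sum_range_succ' (fun d => h (Kn + d)) m]
    -- the DOC recursion for doc τ (In+1) m
    set b : ℝ := bdf2 τ (Kn + 1) 0 with hbdef
    have hbne : b ≠ 0 := hb0 (Kn+1) (by omega) (by omega)
    set S : ℝ := ∑ i' ∈ range m, doc τ (In+1) i' * bdf2 τ (In+1-i') (m-i') with hSdef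
    have hrec : doc τ (In+1) m = -(1/b) * S := by
      rw [show m = (m-1)+1 by omega, doc, Finset.sum_attach _
        (fun i' => doc τ (In+1) i' * bdf2 τ ((In+1) - i') ((m-1)+1 - i'))]
      have e1 : In + 1 - ((m-1)+1) = Kn + 1 := by omega
      have e2 : (m-1)+1 = m := by omega
      rw [e1, e2, ← hbdef, ← hSdef]
    have hlast : h (Kn + 0) = -S := by
      have e : In - Kn = m := by omega
      have : h (Kn + 0) = doc τ (In+1) m * b := by
        simp only [hhdef, Nat.add_zero, Nat.sub_self, e, hbdef]
      rw [this, hrec]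
      field_simp
    have hmain : ∑ d ∈ range m, h (Kn + (d+1)) = S := by
      rw [hSdef, ← Finset.sum_range_reflect
        (fun i' => doc τ (In+1) i' * bdf2 τ (In+1-i') (m-i')) m]
      refine Finset.sum_congr rfl fun d hd => ?_
      have hdm : d < m := Finset.mem_range.mp hd
      simp only [hhdef]
      have e1 : In - (Kn + (d+1)) = m - 1 - d := by omega
      have e2 : Kn + (d+1) + 1 = In + 1 - (m-1-d) := by omega
      have e3 : Kn + (d+1) - Kn = m - (m-1-d) := by omega
      rw [e1, e2, e3]
    rw [hmain, hlast]
    ring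

/-- Positive semi-definiteness of the BDF2 matrix, from the hypothesis `hb`. -/
lemma Bm_psd (N : ℕ) (τ : ℕ → ℝ)
    (hb : ∀ n, 1 ≤ n → n ≤ N → ∀ w : ℕ → ℝ,
      0 ≤ ∑ k ∈ Finset.Icc 1 n, w k * ∑ j ∈ Finset.Icc 1 k, bdf2 τ k (k - j) * w j)
    (n : ℕ) (h1 : 1 ≤ n) (h2 : n ≤ N) (x : Fin n → ℝ) :
    0 ≤ x ⬝ᵥ (Bm τ n *ᵥ x) := by
  set w : ℕ → ℝ := fun k => if h : 1 ≤ k ∧ k ≤ n then x ⟨k-1, by omega⟩ else 0 with hw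
  have hx : (fun i : Fin n => w ((i:ℕ)+1)) = x := by
    funext i
    have hi : 1 ≤ (i:ℕ)+1 ∧ (i:ℕ)+1 ≤ n := ⟨by omega, by have := i.isLt; omega⟩
    simp only [hw, dif_pos hi]
    exact congrArg x (Fin.ext (by simp))
  have hM : (Matrix.of fun i j : Fin n =>
      if (j:ℕ) ≤ (i:ℕ) then bdf2 τ ((i:ℕ)+1) (((i:ℕ)+1) - ((j:ℕ)+1)) else 0) = Bm τ n := by
    ext i j
    simp only [Matrix.of_apply, Bm, Nat.succ_sub_succ]
  have := hb n h1 h2 w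
  rwa [conv_quadform n (fun k j => bdf2 τ k (k - j)) w, hM, hx] at this

/-- positive semi-definiteness of the BDF2 kernels implies that of the DOC kernels. -/
theorem doc_posSemidef_of_bdf2_posSemidef
    (N : ℕ) (τ : ℕ → ℝ) (hτ : ∀ k, 1 ≤ k → k ≤ N → 0 < τ k)
    (hb : ∀ n, 1 ≤ n → n ≤ N → ∀ w : ℕ → ℝ,
      0 ≤ ∑ k ∈ Finset.Icc 1 n, w k * ∑ j ∈ Finset.Icc 1 k, bdf2 τ k (k - j) * w j) :
    ∀ n, 1 ≤ n → n ≤ N → ∀ w : ℕ → ℝ,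
      0 ≤ ∑ k ∈ Finset.Icc 1 n, w k * ∑ j ∈ Finset.Icc 1 k, doc τ k (k - j) * w j := by
  intro n h1 h2 w
  rw [conv_quadform n (fun k j => doc τ k (k - j)) w]
  have hM : (Matrix.of fun i j : Fin n =>
      if (j:ℕ) ≤ (i:ℕ) then doc τ ((i:ℕ)+1) (((i:ℕ)+1) - ((j:ℕ)+1)) else 0) = Tm τ n := by
    ext i j
    simp only [Matrix.of_apply, Tm, Nat.succ_sub_succ]
  rw [hM]
  set x : Fin n → ℝ := fun i => w ((i:ℕ)+1) with hx
  have hb0 : ∀ k, 1 ≤ k → k ≤ n → bdf2 τ k 0 ≠ 0 := fun k hk1 hk2 =>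
    ne_of_gt (bdf2_zero_pos τ N hτ k hk1 (le_trans hk2 h2))
  have hTB : Tm τ n * Bm τ n = 1 := Tm_mul_Bm τ n hb0
  have key : x ⬝ᵥ (Tm τ n *ᵥ x) = (x ᵥ* Tm τ n) ⬝ᵥ (Bm τ n *ᵥ (x ᵥ* Tm τ n)) := by
    rw [Matrix.dotProduct_mulVec x, Matrix.dotProduct_mulVec (x ᵥ* Tm τ n),
      Matrix.vecMul_vecMul, hTB, Matrix.vecMul_one]
    exact dotProduct_comm _ x
  rw [key]
  exact Bm_psd N τ hb n h1 h2 (x ᵥ* Tm τ n)
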